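/- Let C be a chain-like curve, V a nonzero finite-dimensional complex vector space, and M a subbundle of V ⊗ O_C of rank m with locally free quotient, χ(M) < 0, and each restriction M|_{C_j} semistable. Then there exists a polarization w such that M is w-semistable; moreover if some M|_{C_j} is stable then M is w-stable. -/
import Mathlib


/-!
STATEMENT 9: Let C be a chain-like curve, V a nonzero finite-dimensional complex
vector space, and M a subbundle of V ⊗ O_C of rank m with locally free quotient,
χ(M) < 0, and each restriction M|_{C_j} semistable.  Then there is a polarization
w such that M is w-semistable; if moreover some M|_{C_j} is stable, then M is
w-stable.

M and its subsheaves are recorded by their numerical invariants (Euler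
characteristic and multirank); M has multirank (m,…,m).  Since M|_{C_j} is a
subbundle of the trivial bundle V ⊗ O_{C_j} on the smooth component C_j (the
quotient being locally free), its degree deg_j is ≤ 0, so
χ(M|_{C_j}) = deg_j + m(1 - g_j) and χ(M) = ∑_j χ(M|_{C_j}) - (n-1)m.
Semistability and stability of the restrictions are abstract predicates which
enter through Teixidor i Bigas's criterion (hypotheses htx, htxs): if every
restriction is semistable and the polarization inequalities hold, then M is
w-semistable, and w-stable if moreover some restriction is stable.
-/
/-- A polarization on a (chain-like) curve with `n` components: a tuple of
rationals `w_j` with `0 < w_j < 1` summing to `1`. -/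
def IsPolarization {n : ℕ} (w : Fin n → ℚ) : Prop :=
  (∀ j, 0 < w j ∧ w j < 1) ∧ (∑ j, w j) = 1

/-- The `w`-slope `μ_w = χ / ∑ w_j r_j` of a pure dimension-one sheaf with Euler
characteristic `chi` and multirank `r`. -/
def wSlope {n : ℕ} (w : Fin n → ℚ) (chi : ℤ) (r : Fin n → ℕ) : ℚ :=
  (chi : ℚ) / ∑ j, w j * (r j : ℚ)

/-- `w`-semistability of a sheaf with invariants `(chi, rk)`, phrased in terms of
the collection `subs` of numerical invariants `(χ(F), multirank of F)` of its
proper nonzero subsheaves: `μ_w(F) ≤ μ_w(M)` for all such `F`. -/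
def WSemistable {n : ℕ} (w : Fin n → ℚ) (chi : ℤ) (rk : Fin n → ℕ)
    (subs : Set (ℤ × (Fin n → ℕ))) : Prop :=
  ∀ F ∈ subs, wSlope w F.1 F.2 ≤ wSlope w chi rk

/-- `w`-stability: `μ_w(F) < μ_w(M)` for all proper nonzero subsheaves. -/
def WStable {n : ℕ} (w : Fin n → ℚ) (chi : ℤ) (rk : Fin n → ℕ)
    (subs : Set (ℤ × (Fin n → ℕ))) : Prop :=
  ∀ F ∈ subs, wSlope w F.1 F.2 < wSlope w chi rk

/-- The polarization inequalities of Teixidor i Bigas for a bundle of rank `m`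
with Euler characteristic `chi` whose restrictions to the components have Euler
characteristics `chiR j` (indices `0`-based: `i : Fin n` with `(i : ℕ) < n - 1`
corresponds to the `1`-based index `i + 1 ∈ {1,…,n-1}`):
`(∑_{j=1}^i w_j)χ - ∑_{j=1}^{i-1}χ_j + m(i-1) ≤ χ_i ≤ (∑_{j=1}^i w_j)χ - ∑_{j=1}^{i-1}χ_j + mi`. -/
def BigasIneq {n : ℕ} (w : Fin n → ℚ) (m : ℕ) (chi : ℤ) (chiR : Fin n → ℤ) : Prop :=
  ∀ i : Fin n, (i : ℕ) < n - 1 →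
    ((∑ j ∈ Finset.Iic i, w j) * (chi : ℚ) - (∑ j ∈ Finset.Iio i, (chiR j : ℚ))
        + (m : ℚ) * ((i : ℕ) : ℚ) ≤ (chiR i : ℚ)) ∧
    ((chiR i : ℚ) ≤ (∑ j ∈ Finset.Iic i, w j) * (chi : ℚ)
        - (∑ j ∈ Finset.Iio i, (chiR j : ℚ)) + (m : ℚ) * (((i : ℕ) : ℚ) + 1))


private lemma fin_sum_Iic' {n : ℕ} (i : Fin n) (f : ℕ → ℚ) :
    ∑ j ∈ Finset.Iic i, f j.val = ∑ k ∈ Finset.range (i.val + 1), f k := by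
  have h1 : ∑ j ∈ Finset.Iic i, f j.val
      = ∑ j : Fin n, if j.val < i.val + 1 then f j.val else 0 := by
    rw [← Finset.sum_filter]
    congr 1
    ext j
    simp only [Finset.mem_Iic, Finset.mem_filter, Finset.mem_univ, true_and, Fin.le_def]
    omega
  rw [h1, Fin.sum_univ_eq_sum_range (fun k => if k < i.val + 1 then f k else 0) n,
    ← Finset.sum_filter]
  congr 1
  ext k
  simp only [Finset.mem_filter, Finset.mem_range]
  omega

private lemma fin_sum_Iio' {n : ℕ} (i : Fin n) (f : ℕ → ℚ) :
    ∑ j ∈ Finset.Iio i, f j.val = ∑ k ∈ Finset.range i.val, f k := by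
  have h1 : ∑ j ∈ Finset.Iio i, f j.val
      = ∑ j : Fin n, if j.val < i.val then f j.val else 0 := by
    rw [← Finset.sum_filter]
    congr 1
    ext j
    simp only [Finset.mem_Iio, Finset.mem_filter, Finset.mem_univ, true_and, Fin.lt_def]
  rw [h1, Fin.sum_univ_eq_sum_range (fun k => if k < i.val then f k else 0) n,
    ← Finset.sum_filter]
  congr 1
  ext k
  simp only [Finset.mem_filter, Finset.mem_range]
  omega

theorem subbundle_of_trivial_bundle_w_semistable
    (n : ℕ) (hn : 2 ≤ n)
    (g : Fin n → ℤ) (hg : ∀ j, 2 ≤ g j)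
    (m : ℕ) (hm : 0 < m)                                  -- rank of M
    (chi : ℤ) (hchi : chi < 0)                            -- χ(M) < 0
    (degJ : Fin n → ℤ) (hdegJ : ∀ j, degJ j ≤ 0)          -- deg of M|_{C_j} ⊆ V ⊗ O_{C_j}
    (chiJ : Fin n → ℤ)                                    -- χ(M|_{C_j})
    (hchiJ : ∀ j, chiJ j = degJ j + (m : ℤ) * (1 - g j))
    (hrel : chi = (∑ j, chiJ j) - ((n : ℤ) - 1) * (m : ℤ))
    (subs : Set (ℤ × (Fin n → ℕ)))                        -- proper nonzero subsheaves of M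
    (semistableJ stableJ : Fin n → Prop)                  -- (semi)stability of M|_{C_j}
    (hss : ∀ j, semistableJ j)                            -- each M|_{C_j} is semistable
    -- Teixidor i Bigas's criterion (sufficiency):
    (htx : ∀ w : Fin n → ℚ, IsPolarization w → (∀ j, semistableJ j) →
        BigasIneq w m chi chiJ → WSemistable w chi (fun _ => m) subs)
    (htxs : ∀ w : Fin n → ℚ, IsPolarization w → (∀ j, semistableJ j) →
        (∃ j, stableJ j) → BigasIneq w m chi chiJ → WStable w chi (fun _ => m) subs) :
    ∃ w : Fin n → ℚ, IsPolarization w ∧ WSemistable w chi (fun _ => m) subs ∧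
      ((∃ j, stableJ j) → WStable w chi (fun _ => m) subs) := by
  -- numeric setup
  have hchiQ : (chi : ℚ) < 0 := by exact_mod_cast hchi
  have hchine : (chi : ℚ) ≠ 0 := ne_of_lt hchiQ
  have hmQ : (0 : ℚ) < m := by exact_mod_cast hm
  have hcj : ∀ j, (chiJ j : ℚ) ≤ -(m : ℚ) := by
    intro j
    have h1 : chiJ j ≤ -(m : ℤ) := by
      have := hdegJ j; have := hg j; have := hchiJ j
      nlinarith [hm]
    exact_mod_cast h1
  -- the extended Euler characteristics
  set c : ℕ → ℚ := fun k => if h : k < n then (chiJ ⟨k, h⟩ : ℚ) else 0 with hc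
  have hcv : ∀ j : Fin n, (chiJ j : ℚ) = c j.val := by
    intro j; simp [hc, j.isLt]
  -- cumulative weights
  set W : ℕ → ℚ := fun k => if k = 0 then 0 else if k ≤ n - 1 then
      ((∑ j ∈ Finset.range k, c j) - m * k + m / 2) / chi else 1 with hW
  have hW0 : W 0 = 0 := by simp [hW]
  have hWn : W n = 1 := by
    simp only [hW]
    rw [if_neg (by omega), if_neg (by omega)]
  have hWmid : ∀ k, 1 ≤ k → k ≤ n - 1 →
      W k = ((∑ j ∈ Finset.range k, c j) - m * k + m / 2) / chi := by
    intro k h1 h2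
    simp only [hW]
    rw [if_neg (by omega), if_pos h2]
  -- total sum relation in ℚ
  have hsumc : ∑ j ∈ Finset.range n, c j = (∑ j, chiJ j : ℤ) := by
    rw [← Fin.sum_univ_eq_sum_range (fun k => c k) n]
    push_cast
    exact Finset.sum_congr rfl fun j _ => (hcv j).symm
  have hrelQ : (chi : ℚ) = (∑ j ∈ Finset.range n, c j) - ((n : ℚ) - 1) * m := by
    rw [hsumc]
    push_cast [hrel]
    ring
  -- step positivity
  have hstep : ∀ k, k < n → 0 < W (k + 1) - W k := by
    intro k hk
    have hcknum : ∀ l (hl : l < n), c l ≤ -(m : ℚ) := by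
      intro l hl; rw [hc]; simp only [hl, dif_pos]; exact hcj _
    rcases Nat.eq_or_lt_of_le (Nat.succ_le_of_lt hk) with h | h
    · -- k + 1 = n : last step
      have hk1 : k = n - 1 := by omega
      have hWk : W k = ((∑ j ∈ Finset.range k, c j) - m * k + m / 2) / chi :=
        hWmid k (by omega) (by omega)
      have hWk1 : W (k + 1) = 1 := by rw [show k + 1 = n from h, hWn]
      rw [hWk1, hWk]
      have hsplit : (∑ j ∈ Finset.range n, c j)
          = (∑ j ∈ Finset.range k, c j) + c k := by
        rw [← h, Finset.sum_range_succ]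
      have hnum : (1 : ℚ) - ((∑ j ∈ Finset.range k, c j) - m * k + m / 2) / chi
          = (c k - m / 2) / chi := by
        rw [eq_div_iff hchine, sub_mul, div_mul_cancel₀ _ hchine]
        have hkn : (k : ℚ) = (n : ℚ) - 1 := by
          have h2 : k + 1 = n := h
          rw [← h2]; push_cast; ring
        rw [hrelQ, hsplit, hkn]; ring
      rw [sub_pos] at *
      rw [← sub_pos, hnum]
      apply div_pos_of_neg_of_neg _ hchiQ
      have := hcknum k hk
      linarith
    · -- k + 1 ≤ n - 1
      have hWk1 := hWmid (k+1) (by omega) (by omega)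
      push_cast at hWk1
      rcases Nat.eq_zero_or_pos k with hk0 | hk0
      · subst hk0
        rw [hWk1, hW0, sub_zero]
        rw [Finset.sum_range_one]
        have hc0 : c 0 ≤ -(m : ℚ) := hcknum 0 (by omega)
        apply div_pos_of_neg_of_neg
        · push_cast; linarith
        · exact hchiQ
      · have hWk : W k = ((∑ j ∈ Finset.range k, c j) - m * k + m / 2) / chi :=
          hWmid k hk0 (by omega)
        rw [hWk1, hWk, div_sub_div_same]
        have hnum : (∑ j ∈ Finset.range (k+1), c j) - m * (k+1) + m / 2
            - ((∑ j ∈ Finset.range k, c j) - m * k + m / 2) = c k - m := by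
          rw [Finset.sum_range_succ]; push_cast; ring
        rw [hnum]
        apply div_pos_of_neg_of_neg _ hchiQ
        have := hcknum k hk
        linarith
  -- the polarization
  set w : Fin n → ℚ := fun j => W (j.val + 1) - W j.val with hw
  have hsumw : ∑ j, w j = 1 := by
    rw [hw, Fin.sum_univ_eq_sum_range (fun k => W (k + 1) - W k) n,
      Finset.sum_range_sub, hWn, hW0, sub_zero]
  have hwpos : ∀ j, 0 < w j := fun j => hstep j.val j.isLt
  have hpol : IsPolarization w := by
    refine ⟨fun j => ⟨hwpos j, ?_⟩, hsumw⟩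
    obtain ⟨i, hij⟩ : ∃ i : Fin n, i ≠ j :=
      Fintype.exists_ne_of_one_lt_card (by simpa using (by omega : 1 < n)) j
    calc w j < ∑ j', w j' :=
          Finset.single_lt_sum hij (Finset.mem_univ j) (Finset.mem_univ i)
            (hwpos i) (fun k _ _ => (hwpos k).le)
      _ = 1 := hsumw
  -- the Bigas inequalities
  have hbigas : BigasIneq w m chi chiJ := by
    intro i hi
    have hIic : ∑ j ∈ Finset.Iic i, w j = W (i.val + 1) := by
      rw [hw]
      rw [fin_sum_Iic' i (fun k => W (k + 1) - W k), Finset.sum_range_sub, hW0, sub_zero]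
    have hIio : ∑ j ∈ Finset.Iio i, (chiJ j : ℚ) = ∑ k ∈ Finset.range i.val, c k := by
      rw [show (∑ j ∈ Finset.Iio i, (chiJ j : ℚ)) = ∑ j ∈ Finset.Iio i, c j.val from
        Finset.sum_congr rfl fun j _ => hcv j]
      exact fin_sum_Iio' i c
    have hWv := hWmid (i.val + 1) (by omega) (by omega)
    have hmul : (∑ j ∈ Finset.Iic i, w j) * chi
        = (∑ j ∈ Finset.range (i.val + 1), c j) - m * (i.val + 1) + m / 2 := by
      rw [hIic, hWv, div_mul_cancel₀ _ hchine]
      push_cast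
      ring
    have hsum_succ : ∑ j ∈ Finset.range (i.val + 1), c j
        = (∑ k ∈ Finset.range i.val, c k) + c i.val := Finset.sum_range_succ c i.val
    have hci : (chiJ i : ℚ) = c i.val := hcv i
    rw [hmul, hIio, hsum_succ, hci]
    constructor <;> [linarith; linarith]
  exact ⟨w, hpol, htx w hpol hss hbigas, fun hex => htxs w hpol hss hex hbigas⟩
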